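/- For every θ ≥ 3/2 and every sufficiently large n, there exists a single-commodity routing instance whose graph has n vertices and a path flow f that is a θ-UNE but whose induced edge flow is not an ((n−3)θ/3)-PNE. -/

import Mathlib

open scoped BigOperators

/-- A routing instance: a finite directed (multi)graph given by source/target maps
on edges, a finite set of commodities with sources, sinks, demands, and
load-dependent latency functions on edges. -/
structure RoutingInstance (V E K : Type*) where
  src : E → V
  tgt : E → V
  source : K → V
  sink : K → V
  demand : K → ℝ
  latency : E → ℝ → ℝ

namespace RoutingInstance

variable {V E K : Type*} [Fintype V] [Fintype E] [Fintype K] [DecidableEq E]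

/-- Standard assumptions: positive demands, latencies nonnegative and
nondecreasing on `[0, ∞)`. -/
def Standard (G : RoutingInstance V E K) : Prop :=
  (∀ k, 0 < G.demand k) ∧
  (∀ e x, (0:ℝ) ≤ x → 0 ≤ G.latency e x) ∧
  (∀ e, MonotoneOn (G.latency e) (Set.Ici (0:ℝ)))

/-- `G.IsWalkFrom s t l` : the list of edges `l` is a directed walk from `s` to `t`. -/
def IsWalkFrom (G : RoutingInstance V E K) : V → V → List E → Prop
  | s, t, [] => s = t
  | s, t, e :: es => G.src e = s ∧ IsWalkFrom G (G.tgt e) t es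

/-- The list of vertices visited by a walk starting at `s`. -/
def walkVerts (G : RoutingInstance V E K) (s : V) (l : List E) : List V :=
  s :: l.map G.tgt

/-- A simple directed path from the source of commodity `k` to its sink. -/
def IsPathOf (G : RoutingInstance V E K) (k : K) (p : List E) : Prop :=
  G.IsWalkFrom (G.source k) (G.sink k) p ∧ (G.walkVerts (G.source k) p).Nodup

/-- A feasible path flow: nonnegative, supported on simple `s_k`-`t_k` paths,
and routing the whole demand of each commodity. -/
def Feasible (G : RoutingInstance V E K) (f : K → (List E →₀ ℝ)) : Prop :=
  (∀ k p, 0 ≤ f k p) ∧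
  (∀ k p, f k p ≠ 0 → G.IsPathOf k p) ∧
  (∀ k, ((f k).sum fun _ v => v) = G.demand k)

/-- Edge flow of commodity `k` induced by a path flow. -/
def edgeFlowK (G : RoutingInstance V E K) (f : K → (List E →₀ ℝ)) (k : K) (e : E) : ℝ :=
  (f k).sum fun p v => if e ∈ p then v else 0

/-- Total edge flow induced by a path flow. -/
def edgeFlow (G : RoutingInstance V E K) (f : K → (List E →₀ ℝ)) (e : E) : ℝ :=
  ∑ k, G.edgeFlowK f k e

/-- Latency (cost) of a path under the edge flows induced by the path flow `f`. -/
def pathCost (G : RoutingInstance V E K) (f : K → (List E →₀ ℝ)) (p : List E) : ℝ :=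
  (p.map fun e => G.latency e (G.edgeFlow f e)).sum

/-- A path is used by commodity `k` if it carries positive flow in `f`. -/
def Used (G : RoutingInstance V E K) (f : K → (List E →₀ ℝ)) (k : K) (p : List E) : Prop :=
  0 < f k p

/-- A path is positive for commodity `k` if each of its edges carries positive
commodity-`k` flow. -/
def PositivePath (G : RoutingInstance V E K) (f : K → (List E →₀ ℝ)) (k : K) (p : List E) :
    Prop :=
  G.IsPathOf k p ∧ ∀ e ∈ p, 0 < G.edgeFlowK f k e

/-- θ-Positive Nash Equilibrium (a property of the induced edge flow):
every positive path costs at most θ times any path of the same commodity. -/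
def IsPNE (G : RoutingInstance V E K) (θ : ℝ) (f : K → (List E →₀ ℝ)) : Prop :=
  ∀ k p q, G.PositivePath f k p → G.IsPathOf k q →
    G.pathCost f p ≤ θ * G.pathCost f q

/-- θ-Used Nash Equilibrium: every used path costs at most θ times any path
of the same commodity. -/
def IsUNE (G : RoutingInstance V E K) (θ : ℝ) (f : K → (List E →₀ ℝ)) : Prop :=
  ∀ k p q, G.Used f k p → G.IsPathOf k q →
    G.pathCost f p ≤ θ * G.pathCost f q

/-- θ-Envy Free: every used path costs at most θ times any used path
of the same commodity. -/
def IsEF (G : RoutingInstance V E K) (θ : ℝ) (f : K → (List E →₀ ℝ)) : Prop :=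
  ∀ k p q, G.Used f k p → G.Used f k q →
    G.pathCost f p ≤ θ * G.pathCost f q

/-- Social cost of a path flow. -/
def socialCost (G : RoutingInstance V E K) (f : K → (List E →₀ ℝ)) : ℝ :=
  ∑ e, G.edgeFlow f e * G.latency e (G.edgeFlow f e)

end RoutingInstance


namespace Stmt4

open RoutingInstance

/-- vertex `k` (clamped) of the instance on `m+5` vertices. -/
def vv (m k : ℕ) : Fin (m+5) := ⟨min k (m+4), by omega⟩

/-- edge `k` (clamped) of the instance with `3m+6` edges. -/
def ee (m k : ℕ) : Fin (3*m+6) := ⟨min k (3*m+5), by omega⟩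

lemma vv_val {m k : ℕ} (h : k ≤ m+4) : (vv m k).val = k := by
  simp [vv, Nat.min_eq_left h]

lemma ee_val {m k : ℕ} (h : k ≤ 3*m+5) : (ee m k).val = k := by
  simp [ee, Nat.min_eq_left h]

lemma vv_ne {m a b : ℕ} (ha : a ≤ m+4) (hb : b ≤ m+4) (h : a ≠ b) : vv m a ≠ vv m b := by
  intro hh; apply h
  have := congrArg Fin.val hh
  rwa [vv_val ha, vv_val hb] at this

/-- The instance: vertices `s = vv 0`, `t = vv 1`, chain vertices `z_j = vv (j+2)`
for `0 ≤ j ≤ m+2`.  Edges `e < m+2` : chain edges `z_e → z_{e+1}` of latency `θ-1`;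
`m+2 ≤ e < 2m+4` : shortcuts `s → z_{e-(m+2)}` of latency `1/2`;
`2m+4 ≤ e < 3m+6` : shortcuts `z_{e-(2m+4)+1} → t` of latency `1/2`. -/
noncomputable def G (θ : ℝ) (m : ℕ) : RoutingInstance (Fin (m+5)) (Fin (3*m+6)) Unit where
  src e := if e.val < m+2 then vv m (e.val+2)
    else if e.val < 2*m+4 then vv m 0 else vv m (e.val - (2*m+4) + 3)
  tgt e := if e.val < m+2 then vv m (e.val+3)
    else if e.val < 2*m+4 then vv m (e.val - (m+2) + 2) else vv m 1
  source _ := vv m 0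
  sink _ := vv m 1
  demand _ := (m:ℝ)+2
  latency e _ := if e.val < m+2 then θ - 1 else 1/2

lemma vv_congr {m a b : ℕ} (ha : a ≤ m+4) (hb : b ≤ m+4) (h : a = b) : vv m a = vv m b :=
  Fin.ext (by rw [vv_val ha, vv_val hb, h])

lemma src_ee (θ : ℝ) (m k : ℕ) (hk : k ≤ 3*m+5) :
    (G θ m).src (ee m k) =
      if k < m+2 then vv m (k+2) else if k < 2*m+4 then vv m 0 else vv m (k - (2*m+4) + 3) := by
  simp [G, ee_val hk]

lemma tgt_ee (θ : ℝ) (m k : ℕ) (hk : k ≤ 3*m+5) :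
    (G θ m).tgt (ee m k) =
      if k < m+2 then vv m (k+3) else if k < 2*m+4 then vv m (k - (m+2) + 2) else vv m 1 := by
  simp [G, ee_val hk]

lemma ee_surj {m : ℕ} (e : Fin (3*m+6)) : ee m e.val = e := by
  have := e.isLt
  apply Fin.ext
  rw [ee_val (by omega)]

lemma lat_eq (θ : ℝ) (m : ℕ) (e : Fin (3*m+6)) (x : ℝ) :
    (G θ m).latency e x = if e.val < m+2 then θ - 1 else 1/2 := rfl

/-- the used paths -/
def U (m i : ℕ) : List (Fin (3*m+6)) := [ee m (m+2+i), ee m i, ee m (2*m+4+i)]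

/-- the path flow: one unit on each `U i`. -/
noncomputable def f (m : ℕ) : Unit → (List (Fin (3*m+6)) →₀ ℝ) :=
  fun _ => ∑ i : Fin (m+2), Finsupp.single (U m i) 1

/-- the long positive path: whole chain. -/
def P (m : ℕ) : List (Fin (3*m+6)) :=
  ee m (m+2) :: ((List.range (m+2)).map (ee m) ++ [ee m (3*m+5)])

/-- the short comparison path. -/
def Q (m : ℕ) : List (Fin (3*m+6)) := [ee m (m+3), ee m (2*m+4)]

/-- path cost is just the sum of (constant) latencies. -/
noncomputable def cost (θ : ℝ) (m : ℕ) (l : List (Fin (3*m+6))) : ℝ :=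
  (l.map fun e => if e.val < m+2 then θ - 1 else 1/2).sum

lemma pathCost_eq (θ : ℝ) (m : ℕ) (f' : Unit → (List (Fin (3*m+6)) →₀ ℝ))
    (l : List (Fin (3*m+6))) : (G θ m).pathCost f' l = cost θ m l := rfl

lemma cost_nonneg (θ : ℝ) (m : ℕ) (hθ : 3/2 ≤ θ) (l : List (Fin (3*m+6))) :
    0 ≤ cost θ m l := by
  apply List.sum_nonneg
  intro x hx
  simp only [List.mem_map] at hx
  obtain ⟨e, -, rfl⟩ := hx
  split <;> linarith

lemma cost_U (θ : ℝ) (m i : ℕ) (hi : i ≤ m+1) : cost θ m (U m i) = θ := by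
  simp only [cost, U, List.map_cons, List.map_nil, List.sum_cons, List.sum_nil,
    ee_val (show m+2+i ≤ 3*m+5 by omega), ee_val (show i ≤ 3*m+5 by omega),
    ee_val (show 2*m+4+i ≤ 3*m+5 by omega)]
  rw [if_neg (by omega), if_pos (by omega), if_neg (by omega)]
  ring

lemma cost_Q (θ : ℝ) (m : ℕ) : cost θ m (Q m) = 1 := by
  simp only [cost, Q, List.map_cons, List.map_nil, List.sum_cons, List.sum_nil,
    ee_val (show m+3 ≤ 3*m+5 by omega), ee_val (show 2*m+4 ≤ 3*m+5 by omega)]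
  rw [if_neg (by omega), if_neg (by omega)]
  norm_num

lemma cost_P (θ : ℝ) (m : ℕ) : cost θ m (P m) = 1 + (m+2)*(θ-1) := by
  simp only [cost, P, List.map_cons, List.map_append, List.map_map, List.map_nil,
    List.sum_cons, List.sum_append, List.sum_nil,
    ee_val (show m+2 ≤ 3*m+5 by omega), ee_val (show 3*m+5 ≤ 3*m+5 by omega)]
  rw [if_neg (by omega), if_neg (by omega)]
  have : ((List.range (m+2)).map ((fun e : Fin (3*m+6) =>
      if e.val < m+2 then θ - 1 else 1/2) ∘ ee m)) = (List.range (m+2)).map (fun _ => θ - 1) := by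
    apply List.map_congr_left
    intro k hk
    simp only [List.mem_range] at hk
    simp only [Function.comp_apply, ee_val (show k ≤ 3*m+5 by omega)]
    rw [if_pos (by omega)]
  rw [this]
  rw [List.map_const', List.sum_replicate, List.length_range]
  push_cast [nsmul_eq_mul]
  ring

lemma walk_append {V E K : Type*} (G : RoutingInstance V E K) {u v w : V}
    {l₁ l₂ : List E} (h₁ : G.IsWalkFrom u v l₁) (h₂ : G.IsWalkFrom v w l₂) :
    G.IsWalkFrom u w (l₁ ++ l₂) := by
  induction l₁ generalizing u with
  | nil => simpa [RoutingInstance.IsWalkFrom] using h₁ ▸ h₂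
  | cons e es ih =>
      obtain ⟨h1, h2⟩ := h₁
      exact ⟨h1, ih h2⟩

lemma chain_walk (θ : ℝ) (m : ℕ) : ∀ c a, a + c = m+2 →
    (G θ m).IsWalkFrom (vv m (a+2)) (vv m (m+4)) ((List.range' a c).map (ee m)) := by
  intro c
  induction c with
  | zero =>
      intro a ha
      simp only [List.range', List.map_nil, RoutingInstance.IsWalkFrom]
      subst ha; rfl
  | succ c ih =>
      intro a ha
      rw [List.range'_succ, List.map_cons]
      refine ⟨?_, ?_⟩
      · rw [src_ee θ m a (by omega), if_pos (by omega)]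
      · rw [tgt_ee θ m a (by omega), if_pos (by omega)]
        have : a + 3 = (a+1) + 2 := by omega
        rw [this]
        exact ih (a+1) (by omega)

lemma isPath_U (θ : ℝ) (m i : ℕ) (hi : i ≤ m+1) : (G θ m).IsPathOf () (U m i) := by
  constructor
  · show (G θ m).IsWalkFrom (vv m 0) (vv m 1) _
    refine ⟨?_, ?_, ?_, ?_⟩
    · rw [src_ee θ m _ (by omega), if_neg (by omega), if_pos (by omega)]
    · rw [tgt_ee θ m _ (by omega), if_neg (by omega), if_pos (by omega),
        src_ee θ m _ (by omega), if_pos (by omega)]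
      exact vv_congr (by omega) (by omega) (by omega)
    · rw [tgt_ee θ m _ (by omega), if_pos (by omega),
        src_ee θ m _ (by omega), if_neg (by omega), if_neg (by omega)]
      exact vv_congr (by omega) (by omega) (by omega)
    · show (G θ m).IsWalkFrom _ _ []
      rw [tgt_ee θ m _ (by omega), if_neg (by omega), if_neg (by omega)]
      rfl
  · show ((G θ m).walkVerts (vv m 0) (U m i)).Nodup
    have hverts : (G θ m).walkVerts (vv m 0) (U m i) =
        [vv m 0, vv m (i+2), vv m (i+3), vv m 1] := by
      simp only [RoutingInstance.walkVerts, U, List.map_cons, List.map_nil]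
      rw [tgt_ee θ m _ (by omega), if_neg (by omega), if_pos (by omega),
        tgt_ee θ m _ (by omega), if_pos (by omega),
        tgt_ee θ m _ (by omega), if_neg (by omega), if_neg (by omega)]
      rw [show m+2+i - (m+2) + 2 = i+2 from by omega]
    rw [hverts]
    have : ([vv m 0, vv m (i+2), vv m (i+3), vv m 1].map Fin.val).Nodup := by
      simp only [List.map_cons, List.map_nil, vv_val (show 0 ≤ m+4 by omega),
        vv_val (show i+2 ≤ m+4 by omega), vv_val (show i+3 ≤ m+4 by omega),
        vv_val (show 1 ≤ m+4 by omega)]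
      simp only [List.nodup_cons, List.mem_cons, List.mem_singleton, List.not_mem_nil,
        List.nodup_nil, or_false, and_true, not_false_eq_true, not_or]
      omega
    exact this.of_map Fin.val

lemma isPath_Q (θ : ℝ) (m : ℕ) : (G θ m).IsPathOf () (Q m) := by
  constructor
  · show (G θ m).IsWalkFrom (vv m 0) (vv m 1) _
    refine ⟨?_, ?_, ?_⟩
    · rw [src_ee θ m _ (by omega), if_neg (by omega), if_pos (by omega)]
    · rw [tgt_ee θ m _ (by omega), if_neg (by omega), if_pos (by omega),
        src_ee θ m _ (by omega), if_neg (by omega), if_neg (by omega)]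
      exact vv_congr (by omega) (by omega) (by omega)
    · show (G θ m).IsWalkFrom _ _ []
      rw [tgt_ee θ m _ (by omega), if_neg (by omega), if_neg (by omega)]
      rfl
  · show ((G θ m).walkVerts (vv m 0) (Q m)).Nodup
    have hverts : (G θ m).walkVerts (vv m 0) (Q m) = [vv m 0, vv m 3, vv m 1] := by
      simp only [RoutingInstance.walkVerts, Q, List.map_cons, List.map_nil]
      rw [tgt_ee θ m _ (by omega), if_neg (by omega), if_pos (by omega),
        tgt_ee θ m _ (by omega), if_neg (by omega), if_neg (by omega)]
      rw [show m+3 - (m+2) + 2 = 3 from by omega]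
    rw [hverts]
    have : (([vv m 0, vv m 3, vv m 1]).map Fin.val).Nodup := by
      simp only [List.map_cons, List.map_nil, vv_val (show 0 ≤ m+4 by omega),
        vv_val (show 3 ≤ m+4 by omega), vv_val (show 1 ≤ m+4 by omega)]
      simp only [List.nodup_cons, List.mem_cons, List.mem_singleton, List.not_mem_nil,
        List.nodup_nil, or_false, and_true, not_false_eq_true, not_or]
      omega
    exact this.of_map Fin.val

lemma isPath_P (θ : ℝ) (m : ℕ) : (G θ m).IsPathOf () (P m) := by
  constructor
  · show (G θ m).IsWalkFrom (vv m 0) (vv m 1) _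
    refine ⟨?_, ?_⟩
    · rw [src_ee θ m _ (by omega), if_neg (by omega), if_pos (by omega)]
    · rw [tgt_ee θ m _ (by omega), if_neg (by omega), if_pos (by omega)]
      rw [show m+2 - (m+2) + 2 = 0+2 from by omega]
      apply walk_append (G θ m) (v := vv m (m+4))
      · rw [List.range_eq_range']
        exact chain_walk θ m (m+2) 0 (by omega)
      · refine ⟨?_, ?_⟩
        · rw [src_ee θ m _ (by omega), if_neg (by omega), if_neg (by omega)]
          exact vv_congr (by omega) (by omega) (by omega)
        · show (G θ m).IsWalkFrom _ _ []
          rw [tgt_ee θ m _ (by omega), if_neg (by omega), if_neg (by omega)]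
          rfl
  · show ((G θ m).walkVerts (vv m 0) (P m)).Nodup
    have hverts : (G θ m).walkVerts (vv m 0) (P m) =
        vv m 0 :: vv m 2 :: ((List.range (m+2)).map (fun k => vv m (k+3)) ++ [vv m 1]) := by
      simp only [RoutingInstance.walkVerts, P, List.map_cons, List.map_append,
        List.map_map, List.map_nil]
      rw [tgt_ee θ m _ (by omega), if_neg (by omega), if_pos (by omega),
        tgt_ee θ m _ (by omega), if_neg (by omega), if_neg (by omega)]
      rw [show m+2 - (m+2) + 2 = 2 from by omega]
      congr 2
      congr 1
      apply List.map_congr_left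
      intro k hk
      simp only [List.mem_range] at hk
      simp only [Function.comp_apply]
      rw [tgt_ee θ m _ (by omega), if_pos (by omega)]
    rw [hverts]
    have hmap : ((vv m 0 :: vv m 2 :: ((List.range (m+2)).map (fun k => vv m (k+3))
        ++ [vv m 1])).map Fin.val) =
        0 :: 2 :: ((List.range (m+2)).map (fun k => k+3) ++ [1]) := by
      simp only [List.map_cons, List.map_append, List.map_map, List.map_nil,
        vv_val (show 0 ≤ m+4 by omega), vv_val (show 2 ≤ m+4 by omega),
        vv_val (show 1 ≤ m+4 by omega)]
      congr 2
      congr 1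
      apply List.map_congr_left
      intro k hk
      simp only [List.mem_range] at hk
      simp only [Function.comp_apply]
      exact vv_val (by omega)
    have : ((vv m 0 :: vv m 2 :: ((List.range (m+2)).map (fun k => vv m (k+3))
        ++ [vv m 1])).map Fin.val).Nodup := by
      rw [hmap]
      refine List.Nodup.cons ?_ (List.Nodup.cons ?_ ?_)
      · simp only [List.mem_cons, List.mem_append, List.mem_map, List.mem_range,
          List.mem_singleton, not_or]
        push_neg
        refine ⟨by omega, fun k hk => by omega, by omega, by simp⟩
      · simp only [List.mem_append, List.mem_map, List.mem_range, List.mem_singleton, not_or]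
        push_neg
        refine ⟨fun k hk => by omega, by omega⟩
      · rw [List.nodup_append]
        refine ⟨List.Nodup.map (fun a b h => by simpa using h) List.nodup_range,
          List.nodup_singleton 1, ?_⟩
        intro a ha b hb
        simp only [List.mem_map, List.mem_range] at ha
        simp only [List.mem_singleton] at hb
        obtain ⟨k, hk, rfl⟩ := ha
        omega
    exact this.of_map Fin.val


lemma src_val' (θ : ℝ) (m : ℕ) (e : Fin (3*m+6)) :
    ((G θ m).src e).val =
      if e.val < m+2 then e.val+2 else if e.val < 2*m+4 then 0 else e.val - (2*m+4) + 3 := by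
  have hb := e.isLt
  simp only [G]
  split_ifs <;> rw [vv_val (by omega)]

lemma tgt_val' (θ : ℝ) (m : ℕ) (e : Fin (3*m+6)) :
    ((G θ m).tgt e).val =
      if e.val < m+2 then e.val+3 else if e.val < 2*m+4 then e.val - (m+2) + 2 else 1 := by
  have hb := e.isLt
  simp only [G]
  split_ifs <;> rw [vv_val (by omega)]

lemma ee_congr {m a b : ℕ} (ha : a ≤ 3*m+5) (hb : b ≤ 3*m+5) (h : a = b) : ee m a = ee m b :=
  Fin.ext (by rw [ee_val ha, ee_val hb, h])

lemma U_ne {m : ℕ} {i j : ℕ} (hi : i ≤ m+1) (hj : j ≤ m+1) (hij : i ≠ j) :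
    U m i ≠ U m j := by
  intro h
  simp only [U, List.cons.injEq, and_true] at h
  have := congrArg Fin.val h.2.1
  rw [ee_val (by omega), ee_val (by omega)] at this
  exact hij this

lemma f_apply (m : ℕ) (p : List (Fin (3*m+6))) :
    f m () p = ∑ i : Fin (m+2), if U m i.val = p then (1:ℝ) else 0 := by
  show (∑ i : Fin (m+2), Finsupp.single (U m i.val) (1:ℝ)) p = _
  rw [Finset.sum_apply']
  simp [Finsupp.single_apply]

lemma f_nonneg (m : ℕ) (p : List (Fin (3*m+6))) : 0 ≤ f m () p := by
  rw [f_apply]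
  apply Finset.sum_nonneg
  intro i _
  split <;> norm_num

lemma f_supp (m : ℕ) (p : List (Fin (3*m+6))) (h : f m () p ≠ 0) :
    ∃ i : Fin (m+2), p = U m i.val := by
  by_contra hc
  push_neg at hc
  apply h
  rw [f_apply]
  apply Finset.sum_eq_zero
  intro i _
  rw [if_neg (fun hh => hc i hh.symm)]

lemma f_apply_U (m : ℕ) (i : Fin (m+2)) : f m () (U m i.val) = 1 := by
  rw [f_apply, Finset.sum_eq_single i]
  · rw [if_pos rfl]
  · intro j _ hj
    rw [if_neg]
    exact fun hh =>
      hj (Fin.ext (by_contra fun hne => U_ne (by omega) (by omega) hne hh))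
  · intro h
    exact absurd (Finset.mem_univ i) h

lemma f_sum (m : ℕ) : ((f m ()).sum fun _ v => v) = (m:ℝ)+2 := by
  show ((∑ i : Fin (m+2), Finsupp.single (U m i.val) (1:ℝ)).sum fun _ v => v) = _
  rw [← Finsupp.sum_finsetSum_index (fun _ => rfl) (fun _ _ _ => rfl)]
  have : ∀ i : Fin (m+2), ((Finsupp.single (U m i.val) (1:ℝ)).sum fun _ v => v) = 1 :=
    fun i => Finsupp.sum_single_index rfl
  rw [Finset.sum_congr rfl (fun i _ => this i)]
  rw [Finset.sum_const, Finset.card_univ, Fintype.card_fin, nsmul_eq_mul]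
  push_cast
  ring

lemma edgeFlowK_eq (θ : ℝ) (m : ℕ) (e : Fin (3*m+6)) :
    (G θ m).edgeFlowK (f m) () e = ∑ i : Fin (m+2), if e ∈ U m i.val then (1:ℝ) else 0 := by
  show ((∑ i : Fin (m+2), Finsupp.single (U m i.val) (1:ℝ)).sum
      fun p v => if e ∈ p then v else 0) = _
  rw [← Finsupp.sum_finsetSum_index (fun p => by split <;> rfl)
    (fun p x y => by split <;> simp)]
  exact Finset.sum_congr rfl fun i _ => Finsupp.sum_single_index (by split <;> rfl)

lemma flow_pos (θ : ℝ) (m : ℕ) (e : Fin (3*m+6)) (i : Fin (m+2)) (he : e ∈ U m i.val) :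
    0 < (G θ m).edgeFlowK (f m) () e := by
  rw [edgeFlowK_eq]
  have h1 : (if e ∈ U m i.val then (1:ℝ) else 0) ≤
      ∑ j : Fin (m+2), if e ∈ U m j.val then (1:ℝ) else 0 :=
    Finset.single_le_sum (f := fun j : Fin (m+2) => if e ∈ U m j.val then (1:ℝ) else 0)
      (fun j _ => by split <;> norm_num) (Finset.mem_univ i)
  rw [if_pos he] at h1
  linarith

lemma tail_cost (θ : ℝ) (m : ℕ) (hθ : 3/2 ≤ θ) :
    ∀ (l : List (Fin (3*m+6))) (v : Fin (m+5)),
      (G θ m).IsWalkFrom v (vv m 1) l → v ≠ vv m 1 → 1/2 ≤ cost θ m l := by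
  intro l
  induction l with
  | nil =>
      intro v hw hv
      simp only [RoutingInstance.IsWalkFrom] at hw
      exact absurd hw hv
  | cons e es ih =>
      intro v hw hv
      obtain ⟨hsrc, hrest⟩ := hw
      have hb := e.isLt
      have hcost : cost θ m (e :: es) = (if e.val < m+2 then θ-1 else 1/2) + cost θ m es := by
        simp [cost]
      by_cases h2 : e.val < 2*m+4
      · have htgt : (G θ m).tgt e ≠ vv m 1 := by
          intro hh
          have := congrArg Fin.val hh
          rw [tgt_val', vv_val (by omega)] at this
          split_ifs at this <;> omega
        have hrec := ih ((G θ m).tgt e) hrest htgt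
        have hnn : (0:ℝ) ≤ if e.val < m+2 then θ-1 else 1/2 := by split <;> linarith
        rw [hcost]
        linarith
      · rw [hcost, if_neg (by omega)]
        linarith [cost_nonneg θ m hθ es]

lemma path_cost_ge_one (θ : ℝ) (m : ℕ) (hθ : 3/2 ≤ θ) (p : List (Fin (3*m+6)))
    (hp : (G θ m).IsPathOf () p) : 1 ≤ cost θ m p := by
  obtain ⟨hw, -⟩ := hp
  rw [show (G θ m).source () = vv m 0 from rfl, show (G θ m).sink () = vv m 1 from rfl] at hw
  match p, hw with
  | [], hw =>
      exfalso
      simp only [RoutingInstance.IsWalkFrom] at hw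
      exact vv_ne (m := m) (by omega) (by omega) (by omega) hw
  | e :: es, hw =>
      obtain ⟨hsrc, hrest⟩ := hw
      have hb := e.isLt
      have h1 : m+2 ≤ e.val ∧ e.val < 2*m+4 := by
        have := congrArg Fin.val hsrc
        rw [src_val', vv_val (by omega)] at this
        split_ifs at this <;> omega
      have htgt : (G θ m).tgt e ≠ vv m 1 := by
        intro hh
        have := congrArg Fin.val hh
        rw [tgt_val', vv_val (by omega)] at this
        split_ifs at this <;> omega
      have htail := tail_cost θ m hθ es _ hrest htgt
      have hcost : cost θ m (e :: es) = (if e.val < m+2 then θ-1 else 1/2) + cost θ m es := by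
        simp [cost]
      rw [hcost, if_neg (by omega)]
      linarith

lemma standard_G (θ : ℝ) (m : ℕ) (hθ : 3/2 ≤ θ) : (G θ m).Standard := by
  refine ⟨fun k => by show (0:ℝ) < (m:ℝ)+2; positivity, fun e x _ => ?_, fun e => ?_⟩
  · show (0:ℝ) ≤ if e.val < m+2 then θ-1 else 1/2
    split <;> linarith
  · intro a _ b _ _
    exact le_rfl

lemma feasible_G (θ : ℝ) (m : ℕ) : (G θ m).Feasible (f m) := by
  refine ⟨fun k p => f_nonneg m p, fun k p hne => ?_, fun k => f_sum m⟩
  obtain ⟨i, rfl⟩ := f_supp m p hne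
  exact isPath_U θ m i.val (by omega)

lemma une_G (θ : ℝ) (m : ℕ) (hθ : 3/2 ≤ θ) : (G θ m).IsUNE θ (f m) := by
  intro k p q hu hq
  obtain ⟨i, rfl⟩ := f_supp m p (ne_of_gt hu)
  rw [pathCost_eq, pathCost_eq, cost_U θ m i.val (by omega)]
  have h1 := path_cost_ge_one θ m hθ q hq
  have h2 : 0 ≤ θ * (cost θ m q - 1) := mul_nonneg (by linarith) (by linarith)
  linarith

lemma not_pne_G (θ : ℝ) (m : ℕ) (hθ : 3/2 ≤ θ) :
    ¬ (G θ m).IsPNE (((m:ℝ)+2) * θ / 3) (f m) := by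
  intro hP
  have hpos : (G θ m).PositivePath (f m) () (P m) := by
    refine ⟨isPath_P θ m, fun e he => ?_⟩
    simp only [P, List.mem_cons, List.mem_append, List.mem_map, List.mem_range,
      List.mem_singleton] at he
    rcases he with rfl | ⟨k, hk, rfl⟩ | rfl | h
    · exact flow_pos θ m _ ⟨0, by omega⟩ List.mem_cons_self
    · exact flow_pos θ m _ ⟨k, by omega⟩
        (List.mem_cons_of_mem _ List.mem_cons_self)
    · refine flow_pos θ m _ ⟨m+1, by omega⟩ ?_
      show ee m (3*m+5) ∈ U m (m+1)
      simp only [U]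
      rw [show 2*m+4+(m+1) = 3*m+5 from by omega]
      exact List.mem_cons_of_mem _ (List.mem_cons_of_mem _ List.mem_cons_self)
    · exact absurd h List.not_mem_nil
  have h := hP () (P m) (Q m) hpos (isPath_Q θ m)
  rw [pathCost_eq, pathCost_eq, cost_P, cost_Q] at h
  have hm : (0:ℝ) ≤ (m:ℝ) := Nat.cast_nonneg m
  nlinarith [mul_nonneg (show (0:ℝ) ≤ (m:ℝ)+2 by linarith) (show (0:ℝ) ≤ 2*θ-3 by linarith)]

end Stmt4

open RoutingInstance in
/-- For every θ ≥ 3/2 and every sufficiently large n, there is a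
single-commodity instance on n vertices and a path flow f that is a θ-UNE but whose
induced edge flow is not an ((n−3)θ/3)-PNE. -/
theorem stmt_4 (θ : ℝ) (hθ : 3/2 ≤ θ) :
    ∃ N : ℕ, ∀ n : ℕ, N ≤ n →
      ∃ (nE : ℕ) (G : RoutingInstance (Fin n) (Fin nE) Unit)
        (f : Unit → (List (Fin nE) →₀ ℝ)),
        G.Standard ∧ G.Feasible f ∧ G.IsUNE θ f ∧
        ¬ G.IsPNE (((n : ℝ) - 3) * θ / 3) f := by
  refine ⟨5, fun n hn => ?_⟩
  obtain ⟨m, rfl⟩ : ∃ m, n = m + 5 := ⟨n - 5, by omega⟩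
  refine ⟨3*m+6, Stmt4.G θ m, Stmt4.f m, Stmt4.standard_G θ m hθ, Stmt4.feasible_G θ m,
    Stmt4.une_G θ m hθ, ?_⟩
  have hconst : (((m+5 : ℕ) : ℝ) - 3) * θ / 3 = ((m:ℝ)+2) * θ / 3 := by
    push_cast; ring
  rw [hconst]
  exact Stmt4.not_pne_G θ m hθ
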